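/- Let (Ω,ℱ,ℙ) be a probability space with filtration (ℱ_k)_{k≥0}, let (z_k)_{k≥0} be an adapted sequence of ℝ^d-valued random variables with z_0 almost surely equal to a fixed vector, let b > 0 with ‖z_0‖ ≤ b, let ρ ∈ (0,1), and suppose the conditional contraction hypothesis holds. Define τ_b := min{j ≥ 0 : ‖z_j‖ > b} (= ∞ if no such j). Then b²·ℙ(τ_b < ∞) + (ρ^{−1} − 1)·Σ_{k=1}^∞ E[‖z_{k+1}‖²·1{τ_b > k}] ≤ ρ·‖z_0‖²; in particular, ℙ(τ_b < ∞) ≤ ρ·(‖z_0‖/b)². -/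

import Mathlib

open MeasureTheory

/-- Under the conditional contraction hypothesis, with the hitting time
`τ_b = min{j : ‖z_j‖ > b}` (so `{τ_b < ∞} = {∃ j, ‖z_j‖ > b}` and
`{τ_b > k} = {∀ j ≤ k, ‖z_j‖ ≤ b}`), one has
`b²·ℙ(τ_b < ∞) + (ρ⁻¹ − 1)·Σ_{k=1}^∞ E[‖z_{k+1}‖²·1{τ_b > k}] ≤ ρ‖z_0‖²`;
in particular `ℙ(τ_b < ∞) ≤ ρ·(‖z_0‖/b)²`.  (The sum over `k ≥ 1` is written as a `tsum`
over `ℕ` with the index shifted by one.) -/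
theorem escape_probability_bound (d : ℕ) (Ω : Type) [m0 : MeasurableSpace Ω]
    (P : Measure Ω) [IsProbabilityMeasure P] (ℱ : Filtration ℕ m0)
    (z : ℕ → Ω → EuclideanSpace ℝ (Fin d)) (hadapt : Adapted ℱ z)
    (z0 : EuclideanSpace ℝ (Fin d)) (hz0 : ∀ᵐ ω ∂P, z 0 ω = z0)
    (hint : ∀ k, Integrable (fun ω => ‖z k ω‖ ^ 2) P)
    (b : ℝ) (hb : 0 < b) (hz0b : ‖z0‖ ≤ b)
    (ρ : ℝ) (hρ : ρ ∈ Set.Ioo (0 : ℝ) 1)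
    (hcontr : ∀ k : ℕ, ∀ᵐ ω ∂P, ‖z k ω‖ ≤ b →
      (P[fun ω' => ‖z (k + 1) ω'‖ ^ 2 | ℱ k]) ω ≤ ρ * ‖z k ω‖ ^ 2) :
    b ^ 2 * (P {ω | ∃ j : ℕ, b < ‖z j ω‖}).toReal
        + (ρ⁻¹ - 1) * ∑' k : ℕ,
            ∫ ω in {ω | ∀ j ≤ k + 1, ‖z j ω‖ ≤ b}, ‖z (k + 1 + 1) ω‖ ^ 2 ∂P
      ≤ ρ * ‖z0‖ ^ 2 ∧
    (P {ω | ∃ j : ℕ, b < ‖z j ω‖}).toReal ≤ ρ * (‖z0‖ / b) ^ 2 := by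
  obtain ⟨hρ0, hρ1⟩ := hρ
  have hinv1 : 1 < ρ⁻¹ := (one_lt_inv₀ hρ0).2 hρ1
  set A : ℕ → Set Ω := fun k => {ω | ∀ j ≤ k, ‖z j ω‖ ≤ b} with hA
  have hAF : ∀ k, MeasurableSet[ℱ k] (A k) := by
    intro k
    have heq : A k = ⋂ j, ⋂ _ : j ≤ k, {ω | ‖z j ω‖ ≤ b} := by
      ext ω; simp [hA]
    rw [heq]
    refine MeasurableSet.iInter fun j => MeasurableSet.iInter fun hj => ?_
    have hm : StronglyMeasurable[ℱ k] (fun ω => ‖z j ω‖) :=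
      (continuous_norm.measurable.comp ((hadapt j).mono (ℱ.mono hj) le_rfl)).stronglyMeasurable
    exact hm.measurable measurableSet_Iic
  have hAm : ∀ k, MeasurableSet (A k) := fun k => ℱ.le k _ (hAF k)
  have hAanti : Antitone A := by
    intro j k hjk ω hω i hij
    exact hω i (hij.trans hjk)
  set a : ℕ → ℝ := fun k => ∫ ω in A k, ‖z (k + 1) ω‖ ^ 2 ∂P with ha
  set p : ℕ → ℝ := fun k => (P (A k \ A (k + 1))).toReal with hp
  have ha_nonneg : ∀ k, 0 ≤ a k := fun k =>
    setIntegral_nonneg (hAm k) fun ω _ => sq_nonneg _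
  have hp_nonneg : ∀ k, 0 ≤ p k := fun k => ENNReal.toReal_nonneg
  -- the contraction step on the set A k
  have hstep : ∀ k, a k ≤ ρ * ∫ ω in A k, ‖z k ω‖ ^ 2 ∂P := by
    intro k
    have h1 : a k = ∫ ω in A k, (P[fun ω' => ‖z (k + 1) ω'‖ ^ 2 | ℱ k]) ω ∂P :=
      (setIntegral_condExp (ℱ.le k) (hint (k + 1)) (hAF k)).symm
    rw [h1, ← integral_const_mul]
    refine setIntegral_mono_ae_restrict integrable_condExp.integrableOn
      (((hint k).const_mul ρ).integrableOn) ?_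
    filter_upwards [ae_restrict_of_ae (hcontr k), ae_restrict_mem (hAm k)] with ω hω hmem
    exact hω (hmem k le_rfl)
  -- splitting A k into A (k+1) and the difference
  have hsplit : ∀ k, ∫ ω in A (k + 1), ‖z (k + 1) ω‖ ^ 2 ∂P
      + ∫ ω in A k \ A (k + 1), ‖z (k + 1) ω‖ ^ 2 ∂P = a k := by
    intro k
    have hsub : A (k + 1) ⊆ A k := hAanti (Nat.le_succ k)
    have : a k = ∫ ω in A (k + 1) ∪ (A k \ A (k + 1)), ‖z (k + 1) ω‖ ^ 2 ∂P := by
      rw [Set.union_diff_cancel hsub]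
    rw [this, setIntegral_union Set.disjoint_sdiff_right ((hAm k).diff (hAm (k + 1)))
      (hint (k + 1)).integrableOn (hint (k + 1)).integrableOn]
  -- lower bound on the difference integral
  have hdiff : ∀ k, b ^ 2 * p k ≤ ∫ ω in A k \ A (k + 1), ‖z (k + 1) ω‖ ^ 2 ∂P := by
    intro k
    refine setIntegral_ge_of_const_le_real ((hAm k).diff (hAm (k + 1))) (measure_ne_top P _)
      ?_ (hint (k + 1)).integrableOn
    rintro ω ⟨h1, h2⟩
    simp only [hA, Set.mem_setOf_eq, not_forall] at h2
    push_neg at h2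
    obtain ⟨j, hj, hgt⟩ := h2
    have hj' : j = k + 1 := by
      by_contra h
      exact absurd (h1 j (by omega)) (not_le.mpr hgt)
    rw [hj'] at hgt
    exact pow_le_pow_left₀ hb.le hgt.le 2
  -- the key recursion
  have hkey : ∀ k, b ^ 2 * p k + ρ⁻¹ * a (k + 1) ≤ a k := by
    intro k
    have h3 : a (k + 1) ≤ ρ * (a k - b ^ 2 * p k) := by
      refine (hstep (k + 1)).trans ?_
      refine mul_le_mul_of_nonneg_left ?_ hρ0.le
      have h4 := hsplit k
      have h5 := hdiff k
      linarith
    have h6 := mul_le_mul_of_nonneg_left h3 (inv_nonneg.2 hρ0.le)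
    have h7 : ρ⁻¹ * (ρ * (a k - b ^ 2 * p k)) = a k - b ^ 2 * p k := by
      rw [← mul_assoc, inv_mul_cancel₀ hρ0.ne', one_mul]
    linarith
  -- the base bound
  have ha0 : a 0 ≤ ρ * ‖z0‖ ^ 2 := by
    refine (hstep 0).trans ?_
    refine mul_le_mul_of_nonneg_left ?_ hρ0.le
    have hcongr : ∫ ω in A 0, ‖z 0 ω‖ ^ 2 ∂P = ∫ _ω in A 0, ‖z0‖ ^ 2 ∂P :=
      setIntegral_congr_ae (hAm 0) (hz0.mono fun ω h _ => by rw [h])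
    rw [hcongr, setIntegral_const, smul_eq_mul]
    have hle1 : (P (A 0)).toReal ≤ 1 := by
      simpa using ENNReal.toReal_mono ENNReal.one_ne_top (prob_le_one (μ := P) (s := A 0))
    nlinarith [sq_nonneg ‖z0‖, show P.real (A 0) = (P (A 0)).toReal from rfl]
  set c : ℕ → ℝ := fun k => b ^ 2 * p k + (ρ⁻¹ - 1) * a (k + 1) with hc
  have hc_nonneg : ∀ k, 0 ≤ c k := fun k =>
    add_nonneg (mul_nonneg (sq_nonneg b) (hp_nonneg k))
      (mul_nonneg (by linarith) (ha_nonneg (k + 1)))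
  have hc_le : ∀ k, c k ≤ a k - a (k + 1) := by
    intro k
    have := hkey k
    simp only [hc]
    linarith
  have hc_partial : ∀ N, ∑ k ∈ Finset.range N, c k ≤ ρ * ‖z0‖ ^ 2 := by
    intro N
    calc ∑ k ∈ Finset.range N, c k ≤ ∑ k ∈ Finset.range N, (a k - a (k + 1)) :=
          Finset.sum_le_sum fun k _ => hc_le k
      _ = a 0 - a N := Finset.sum_range_sub' a N
      _ ≤ a 0 := by linarith [ha_nonneg N]
      _ ≤ ρ * ‖z0‖ ^ 2 := ha0
  have hc_summable : Summable c := summable_of_sum_range_le hc_nonneg hc_partial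
  have hc_tsum : ∑' k, c k ≤ ρ * ‖z0‖ ^ 2 :=
    Real.tsum_le_of_sum_range_le hc_nonneg hc_partial
  -- summability of the pieces
  have ha'_summable : Summable (fun k => a (k + 1)) := by
    refine Summable.of_nonneg_of_le (fun k => ha_nonneg (k + 1))
      (fun k => ?_) (hc_summable.mul_left (ρ⁻¹ - 1)⁻¹)
    have h1 : (ρ⁻¹ - 1) * a (k + 1) ≤ c k := by
      have := mul_nonneg (sq_nonneg b) (hp_nonneg k)
      simp only [hc]; linarith
    have h2 : 0 < ρ⁻¹ - 1 := by linarith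
    rw [← inv_mul_cancel_left₀ h2.ne' (a (k + 1))]
    exact mul_le_mul_of_nonneg_left h1 (inv_nonneg.2 h2.le)
  -- telescoping sum for p
  have hp_eq : ∀ k, p k = (P (A k)).toReal - (P (A (k + 1))).toReal := by
    intro k
    have hsub : A (k + 1) ⊆ A k := hAanti (Nat.le_succ k)
    show (P (A k \ A (k + 1))).toReal = _
    rw [measure_diff hsub (hAm (k + 1)).nullMeasurableSet (measure_ne_top P _),
      ENNReal.toReal_sub_of_le (measure_mono hsub) (measure_ne_top P _)]
  have hPA0 : P (A 0) = 1 := by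
    have hae : ∀ᵐ ω ∂P, ω ∈ A 0 := by
      filter_upwards [hz0] with ω h
      intro j hj
      obtain rfl : j = 0 := Nat.le_zero.mp hj
      rw [h]; exact hz0b
    have h0 : P (A 0)ᶜ = 0 := by
      rw [MeasureTheory.ae_iff] at hae
      exact hae
    calc P (A 0) = P Set.univ := measure_congr (MeasureTheory.ae_eq_univ.2 h0)
      _ = 1 := measure_univ
  have hp_partial : ∀ N, ∑ k ∈ Finset.range N, p k = 1 - (P (A N)).toReal := by
    intro N
    have : ∑ k ∈ Finset.range N, p k
        = ∑ k ∈ Finset.range N, ((fun k => (P (A k)).toReal) k - (fun k => (P (A k)).toReal) (k + 1)) := by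
      exact Finset.sum_congr rfl fun k _ => hp_eq k
    rw [this, Finset.sum_range_sub' (fun k => (P (A k)).toReal) N, hPA0]
    simp
  -- the limit of P (A N)
  have hlim : Filter.Tendsto (fun N => (P (A N)).toReal) Filter.atTop
      (nhds ((P (⋂ k, A k)).toReal)) := by
    have h := tendsto_measure_iInter_atTop (fun k => (hAm k).nullMeasurableSet) hAanti
      ⟨0, measure_ne_top P _⟩
    exact (ENNReal.tendsto_toReal (measure_ne_top P _)).comp h
  have hp_hassum : HasSum p (1 - (P (⋂ k, A k)).toReal) := by
    rw [hasSum_iff_tendsto_nat_of_nonneg hp_nonneg]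
    have : (fun N => ∑ k ∈ Finset.range N, p k) = fun N => 1 - (P (A N)).toReal :=
      funext hp_partial
    rw [this]
    exact Filter.Tendsto.sub tendsto_const_nhds hlim
  have hp_summable : Summable p := hp_hassum.summable
  -- identification of the escape probability
  have hTc : {ω | ∃ j : ℕ, b < ‖z j ω‖} = (⋂ k, A k)ᶜ := by
    ext ω
    simp only [Set.mem_setOf_eq, Set.mem_compl_iff, Set.mem_iInter, hA, not_forall, not_le]
    constructor
    · rintro ⟨j, hj⟩; exact ⟨j, j, le_rfl, hj⟩
    · rintro ⟨k, j, hjk, hj⟩; exact ⟨j, hj⟩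
  have hPtau : (P {ω | ∃ j : ℕ, b < ‖z j ω‖}).toReal = 1 - (P (⋂ k, A k)).toReal := by
    rw [hTc, measure_compl (MeasurableSet.iInter hAm) (measure_ne_top P _), measure_univ,
      ENNReal.toReal_sub_of_le prob_le_one ENNReal.one_ne_top, ENNReal.toReal_one]
  have hp_tsum : ∑' k, p k = (P {ω | ∃ j : ℕ, b < ‖z j ω‖}).toReal := by
    rw [hp_hassum.tsum_eq, hPtau]
  -- rewrite the goal's tsum
  have hgoal_eq : (fun k : ℕ => ∫ ω in {ω | ∀ j ≤ k + 1, ‖z j ω‖ ≤ b},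
      ‖z (k + 1 + 1) ω‖ ^ 2 ∂P) = fun k => a (k + 1) := rfl
  have hmain : b ^ 2 * (P {ω | ∃ j : ℕ, b < ‖z j ω‖}).toReal
      + (ρ⁻¹ - 1) * ∑' k, a (k + 1) ≤ ρ * ‖z0‖ ^ 2 := by
    rw [← hp_tsum, ← tsum_mul_left, ← tsum_mul_left,
      ← Summable.tsum_add (hp_summable.mul_left (b ^ 2)) (ha'_summable.mul_left (ρ⁻¹ - 1))]
    exact hc_tsum
  constructor
  · rw [show (∑' k : ℕ, ∫ ω in {ω | ∀ j ≤ k + 1, ‖z j ω‖ ≤ b}, ‖z (k + 1 + 1) ω‖ ^ 2 ∂P)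
      = ∑' k, a (k + 1) from by rw [hgoal_eq]]
    exact hmain
  · have hsum_nonneg : 0 ≤ ∑' k, a (k + 1) := tsum_nonneg fun k => ha_nonneg (k + 1)
    have h1 : b ^ 2 * (P {ω | ∃ j : ℕ, b < ‖z j ω‖}).toReal ≤ ρ * ‖z0‖ ^ 2 := by
      nlinarith
    rw [div_pow, ← mul_div_assoc, le_div_iff₀ (by positivity)]
    nlinarith
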